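/- Let T be a standard tableau of a two-column shape with first-column entries a_1 < … < a_r and second-column entries b_1 < … < b_s, and let T* be the associated row-standard tableau defined by: a*_1 = b_1 − 1; for 2 ≤ p ≤ s, a*_p is the maximal element of {a_1,…,a_r} \ {a*_1,…,a*_{p−1}} that is less than b_p; and for p > s, a*_p is the minimal remaining element. Then T* is well-defined (each a*_p exists) and is row-standard, i.e. a*_p < b_p for all 1 ≤ p ≤ s. -/

import Mathlib

/-- Entry map of a two-column tableau with first-column entries `a` and second-column
entries `b` (all 0-indexed): box `q < r` of the first column carries entry `a q`,
box `r + p` of the second column carries entry `b p`. -/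
def entryOf (r s : ℕ) (a : Fin r → Fin (r + s)) (b : Fin s → Fin (r + s)) :
    Fin (r + s) → Fin (r + s) := fun x =>
  if h : x.val < r then a ⟨x.val, h⟩ else b ⟨x.val - r, by have := x.isLt; omega⟩

namespace Stmt13Aux

variable {r s : ℕ}

def AF (a : Fin r → Fin (r + s)) : Finset (Fin (r + s)) := Finset.univ.image a

def ch (hs : 0 < s) (a : Fin r → Fin (r + s)) (b : Fin s → Fin (r + s))
    (p : ℕ) (U : Finset (Fin (r + s))) : Fin (r + s) :=
  if h : p < s then
    (((AF a).filter fun x => x ∉ U ∧ x < b ⟨p, h⟩).max).unbotD ⟨0, by omega⟩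
  else (((AF a) \ U).min).untopD ⟨0, by omega⟩

def usedF (hs : 0 < s) (a : Fin r → Fin (r + s)) (b : Fin s → Fin (r + s)) :
    ℕ → Finset (Fin (r + s))
  | 0 => ∅
  | p + 1 => usedF hs a b p ∪ {ch hs a b p (usedF hs a b p)}

def astarF (hs : 0 < s) (a : Fin r → Fin (r + s)) (b : Fin s → Fin (r + s)) (p : ℕ) :
    Fin (r + s) := ch hs a b p (usedF hs a b p)

variable (hs : 0 < s) (a : Fin r → Fin (r + s)) (b : Fin s → Fin (r + s))

lemma used_succ (p : ℕ) :
    usedF hs a b (p + 1) = usedF hs a b p ∪ {astarF hs a b p} := rfl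

lemma used_mono : ∀ {p q : ℕ}, p ≤ q → usedF hs a b p ⊆ usedF hs a b q := by
  intro p q h
  induction q with
  | zero => simpa [Nat.le_zero.mp h] using Finset.Subset.refl _
  | succ q ih =>
    rcases Nat.lt_succ_iff_lt_or_eq.mp (Nat.lt_succ_of_le h) with h' | rfl
    · exact (ih (by omega)).trans (by rw [used_succ]; exact Finset.subset_union_left)
    · exact Finset.Subset.refl _

lemma ch_eq_max' {p : ℕ} (h : p < s) {U : Finset (Fin (r + s))}
    (hne : ((AF a).filter fun x => x ∉ U ∧ x < b ⟨p, h⟩).Nonempty) :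
    ch hs a b p U = ((AF a).filter fun x => x ∉ U ∧ x < b ⟨p, h⟩).max' hne := by
  rw [ch, dif_pos h, ← Finset.coe_max' hne, WithBot.unbotD_coe]

lemma ch_eq_min' {p : ℕ} (h : ¬ p < s) {U : Finset (Fin (r + s))}
    (hne : ((AF a) \ U).Nonempty) :
    ch hs a b p U = ((AF a) \ U).min' hne := by
  rw [ch, dif_neg h, ← Finset.coe_min' hne, WithTop.untopD_coe]

lemma AF_card (ha : StrictMono a) : (AF a).card = r := by
  rw [AF, Finset.card_image_of_injective _ ha.injective, Finset.card_univ, Fintype.card_fin]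

lemma S_nonempty (hrs : s ≤ r) (ha : StrictMono a)
    (hcol : ∀ p : Fin s, a (Fin.castLE hrs p) < b p)
    {p : ℕ} (h : p < s) {U : Finset (Fin (r + s))} (hU : U.card ≤ p) :
    ((AF a).filter fun x => x ∉ U ∧ x < b ⟨p, h⟩).Nonempty := by
  set F := (AF a).filter (fun x => x < b ⟨p, h⟩) with hF
  have hpr : p + 1 ≤ r := by omega
  have hsub : (Finset.univ.image fun i : Fin (p + 1) => a (Fin.castLE hpr i)) ⊆ F := by
    intro x hx
    simp only [Finset.mem_image, Finset.mem_univ, true_and] at hx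
    obtain ⟨i, rfl⟩ := hx
    rw [hF, Finset.mem_filter]
    refine ⟨Finset.mem_image_of_mem a (Finset.mem_univ _), ?_⟩
    have h1 : a (Fin.castLE hpr i) ≤ a ⟨p, by omega⟩ :=
      ha.monotone (by simpa [Fin.le_def] using Nat.lt_succ_iff.mp i.isLt)
    exact lt_of_le_of_lt h1 (hcol ⟨p, h⟩)
  have hcard : p + 1 ≤ F.card := by
    have := Finset.card_le_card hsub
    have hinj : Function.Injective fun i : Fin (p + 1) => a (Fin.castLE hpr i) :=
      fun i j hij => Fin.castLE_injective hpr (ha.injective hij)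
    rwa [Finset.card_image_of_injective _ hinj, Finset.card_univ, Fintype.card_fin] at this
  have hsub2 : F \ U ⊆ (AF a).filter fun x => x ∉ U ∧ x < b ⟨p, h⟩ := by
    intro x hx
    rw [Finset.mem_sdiff, hF, Finset.mem_filter] at hx
    rw [Finset.mem_filter]
    tauto
  have hpos : 0 < (F \ U).card := by
    have := Finset.le_card_sdiff U F
    omega
  exact Finset.Nonempty.mono hsub2 (Finset.card_pos.mp hpos)

lemma T_nonempty (ha : StrictMono a) {p : ℕ} (hp : p < r) {U : Finset (Fin (r + s))}
    (hU : U.card ≤ p) : ((AF a) \ U).Nonempty := by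
  have h1 := Finset.le_card_sdiff U (AF a)
  rw [AF_card a ha] at h1
  exact Finset.card_pos.mp (by omega)

lemma good (hrs : s ≤ r) (ha : StrictMono a)
    (hcol : ∀ p : Fin s, a (Fin.castLE hrs p) < b p) :
    ∀ p, p ≤ r → (usedF hs a b p).card = p ∧
      ∀ q, q < p → astarF hs a b q ∈ AF a ∧ astarF hs a b q ∉ usedF hs a b q ∧
        ∀ h : q < s, astarF hs a b q < b ⟨q, h⟩ := by
  intro p
  induction p with
  | zero => intro _; exact ⟨rfl, by omega⟩
  | succ p ih =>
    intro hp
    obtain ⟨hcard, hprev⟩ := ih (by omega)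
    have hnew : astarF hs a b p ∈ AF a ∧ astarF hs a b p ∉ usedF hs a b p ∧
        ∀ h : p < s, astarF hs a b p < b ⟨p, h⟩ := by
      by_cases h : p < s
      · have hne := S_nonempty a b hrs ha hcol h (le_of_eq hcard)
        have heq : astarF hs a b p = _ := ch_eq_max' hs a b h hne
        have hmem := Finset.max'_mem _ hne
        rw [← heq, Finset.mem_filter] at hmem
        exact ⟨hmem.1, hmem.2.1, fun h' => hmem.2.2⟩
      · have hne := T_nonempty a ha (by omega : p < r) (le_of_eq hcard)
        have heq : astarF hs a b p = _ := ch_eq_min' hs a b h hne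
        have hmem := Finset.min'_mem _ hne
        rw [← heq, Finset.mem_sdiff] at hmem
        exact ⟨hmem.1, hmem.2, fun h' => absurd h' h⟩
    refine ⟨?_, ?_⟩
    · rw [used_succ,
        Finset.card_union_of_disjoint (Finset.disjoint_singleton_right.mpr hnew.2.1),
        hcard, Finset.card_singleton]
    · intro q hq
      rcases Nat.lt_succ_iff_lt_or_eq.mp hq with h | rfl
      · exact hprev q h
      · exact hnew

lemma mem_used_iff :
    ∀ p (x : Fin (r + s)), x ∈ usedF hs a b p ↔ ∃ q, q < p ∧ astarF hs a b q = x := by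
  intro p
  induction p with
  | zero => intro x; simp [usedF]
  | succ p ih =>
    intro x
    rw [used_succ, Finset.mem_union, Finset.mem_singleton, ih]
    constructor
    · rintro (⟨q, hq, rfl⟩ | rfl)
      · exact ⟨q, by omega, rfl⟩
      · exact ⟨p, by omega, rfl⟩
    · rintro ⟨q, hq, rfl⟩
      rcases Nat.lt_succ_iff_lt_or_eq.mp hq with h' | rfl
      · exact Or.inl ⟨q, h', rfl⟩
      · exact Or.inr rfl

end Stmt13Aux

/-- given a standard two-column tableau `T` (first-column entries
`a_1 < ... < a_r`, second-column entries `b_1 < ... < b_s`, all 0-indexed here), the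
greedy construction of `T*` is well defined and row-standard: there exists an injective
`astar` with the same values as `a` such that `a*_1 = b_1 - 1`, for `p ≤ s` the value
`a*_p` is the greatest yet-unused first-column entry `< b_p` (and in particular
`a*_p < b_p`, so `T*` is row-standard), and for `p > s` the value `a*_p` is the least
yet-unused first-column entry. -/

theorem stmt13 (r s : ℕ) (hrs : s ≤ r) (hs : 0 < s)
    (a : Fin r → Fin (r + s)) (b : Fin s → Fin (r + s))
    (ha : StrictMono a) (hb : StrictMono b)
    (hcol : ∀ p : Fin s, a (Fin.castLE hrs p) < b p)
    (hbij : Function.Bijective (entryOf r s a b)) :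
    ∃ astar : Fin r → Fin (r + s),
      Function.Injective astar ∧
      Set.range astar = Set.range a ∧
      (astar ⟨0, by omega⟩).val = (b ⟨0, hs⟩).val - 1 ∧
      (∀ p : Fin s,
        astar (Fin.castLE hrs p) < b p ∧
        IsGreatest {x : Fin (r + s) | x ∈ Set.range a ∧
            (∀ q : Fin r, q.val < p.val → astar q ≠ x) ∧ x < b p}
          (astar (Fin.castLE hrs p))) ∧
      (∀ p : Fin r, s ≤ p.val →
        IsLeast {x : Fin (r + s) | x ∈ Set.range a ∧
            ∀ q : Fin r, q.val < p.val → astar q ≠ x}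
          (astar p)) := by
  classical
  have hgood := Stmt13Aux.good hs a b hrs ha hcol
  have hG := (hgood r le_rfl).2
  have hrangeA : ∀ x : Fin (r + s), x ∈ Stmt13Aux.AF a ↔ x ∈ Set.range a := by
    intro x
    rw [Stmt13Aux.AF, Finset.mem_image]
    simp [Set.mem_range]
  have key : ∀ (P : ℕ), P < r → ∀ q : Fin r, q.val < P →
      Stmt13Aux.astarF hs a b q.val ≠ Stmt13Aux.astarF hs a b P := by
    intro P hP q hq heq
    have h1 : Stmt13Aux.astarF hs a b q.val ∈ Stmt13Aux.usedF hs a b P :=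
      (Stmt13Aux.mem_used_iff hs a b P _).mpr ⟨q.val, hq, rfl⟩
    rw [heq] at h1
    exact (hG P hP).2.1 h1
  have hnotused : ∀ (P : ℕ), P ≤ r → ∀ x : Fin (r + s),
      (∀ q : Fin r, q.val < P → Stmt13Aux.astarF hs a b q.val ≠ x) →
      x ∉ Stmt13Aux.usedF hs a b P := by
    intro P hP x hx hmem
    obtain ⟨q, hq, hqx⟩ := (Stmt13Aux.mem_used_iff hs a b P x).mp hmem
    exact hx ⟨q, by omega⟩ hq hqx
  have hinj : Function.Injective (fun p : Fin r => Stmt13Aux.astarF hs a b p.val) := by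
    intro p q hpq
    have hpq' : Stmt13Aux.astarF hs a b p.val = Stmt13Aux.astarF hs a b q.val := hpq
    by_contra hne
    have hv : p.val ≠ q.val := fun h => hne (Fin.ext h)
    rcases Nat.lt_or_ge q.val p.val with hlt | hge
    · exact key p.val p.isLt q hlt hpq'.symm
    · exact key q.val q.isLt p (by omega) hpq'
  refine ⟨fun p : Fin r => Stmt13Aux.astarF hs a b p.val, hinj, ?_, ?_, ?_, ?_⟩
  · -- range equality
    have himg : Finset.univ.image (fun p : Fin r => Stmt13Aux.astarF hs a b p.val)
        = Stmt13Aux.AF a := by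
      apply Finset.eq_of_subset_of_card_le
      · intro x hx
        rw [Finset.mem_image] at hx
        obtain ⟨p, -, rfl⟩ := hx
        exact (hG p.val p.isLt).1
      · rw [Stmt13Aux.AF_card a ha, Finset.card_image_of_injective _ hinj,
          Finset.card_univ, Fintype.card_fin]
    ext x
    constructor
    · rintro ⟨p, rfl⟩
      exact (hrangeA _).mp (hG p.val p.isLt).1
    · rintro ⟨i, rfl⟩
      have hmem : a i ∈ Finset.univ.image (fun p : Fin r => Stmt13Aux.astarF hs a b p.val) := by
        rw [himg]
        exact Finset.mem_image_of_mem a (Finset.mem_univ i)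
      rw [Finset.mem_image] at hmem
      obtain ⟨p, -, hp⟩ := hmem
      exact ⟨p, hp⟩
  · -- astar 0 = b 0 - 1
    have hb0pos : 0 < (b ⟨0, hs⟩).val := by
      have h := Fin.lt_def.mp (hcol ⟨0, hs⟩)
      omega
    have hc : (b ⟨0, hs⟩).val - 1 < r + s := by have := (b ⟨0, hs⟩).isLt; omega
    set c : Fin (r + s) := ⟨(b ⟨0, hs⟩).val - 1, hc⟩ with hcdef
    have hcA : c ∈ Stmt13Aux.AF a := by
      obtain ⟨x, hx⟩ := hbij.2 c
      simp only [entryOf] at hx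
      by_cases hxr : x.val < r
      · rw [dif_pos hxr] at hx
        exact hx ▸ Finset.mem_image_of_mem a (Finset.mem_univ _)
      · rw [dif_neg hxr] at hx
        exfalso
        have hle : b ⟨0, hs⟩ ≤ b ⟨x.val - r, by have := x.isLt; omega⟩ :=
          hb.monotone (by simp [Fin.le_def])
        rw [hx] at hle
        have := Fin.le_def.mp hle
        simp only [hcdef] at this
        omega
    have h0ne : ((Stmt13Aux.AF a).filter fun x =>
        x ∉ Stmt13Aux.usedF hs a b 0 ∧ x < b ⟨0, hs⟩).Nonempty :=
      Stmt13Aux.S_nonempty a b hrs ha hcol hs (le_of_eq (hgood 0 (by omega)).1)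
    have heq : Stmt13Aux.astarF hs a b 0 = _ := Stmt13Aux.ch_eq_max' hs a b hs h0ne
    have hcS : c ∈ (Stmt13Aux.AF a).filter fun x =>
        x ∉ Stmt13Aux.usedF hs a b 0 ∧ x < b ⟨0, hs⟩ := by
      rw [Finset.mem_filter]
      refine ⟨hcA, by simp [Stmt13Aux.usedF], Fin.lt_def.mpr ?_⟩
      simp only [hcdef]
      omega
    have hub : ∀ x ∈ (Stmt13Aux.AF a).filter fun x =>
        x ∉ Stmt13Aux.usedF hs a b 0 ∧ x < b ⟨0, hs⟩, x ≤ c := by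
      intro x hx
      rw [Finset.mem_filter] at hx
      have := Fin.lt_def.mp hx.2.2
      exact Fin.le_def.mpr (by simp only [hcdef]; omega)
    have hmax : (_ : Finset (Fin (r + s))).max' h0ne = c :=
      le_antisymm (hub _ (Finset.max'_mem _ h0ne)) (Finset.le_max' _ c hcS)
    show (Stmt13Aux.astarF hs a b 0).val = (b ⟨0, hs⟩).val - 1
    rw [heq, hmax]
  · -- IsGreatest part
    intro p
    have hPr : p.val < r := lt_of_lt_of_le p.isLt hrs
    have hne := Stmt13Aux.S_nonempty a b hrs ha hcol p.isLt
      (le_of_eq (hgood p.val (le_of_lt hPr)).1)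
    have heq : Stmt13Aux.astarF hs a b p.val = _ := Stmt13Aux.ch_eq_max' hs a b p.isLt hne
    have hmem := Finset.max'_mem _ hne
    rw [← heq, Finset.mem_filter] at hmem
    have hbp : b ⟨p.val, p.isLt⟩ = b p := congrArg b (Fin.ext rfl)
    have hlt : Stmt13Aux.astarF hs a b p.val < b p := hbp ▸ hmem.2.2
    refine ⟨hlt, ⟨⟨(hrangeA _).mp hmem.1, fun q hq => key p.val hPr q hq, hlt⟩, ?_⟩⟩
    intro x hx
    obtain ⟨hx1, hx2, hx3⟩ := hx
    have hxS : x ∈ (Stmt13Aux.AF a).filter fun y =>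
        y ∉ Stmt13Aux.usedF hs a b p.val ∧ y < b ⟨p.val, p.isLt⟩ := by
      rw [Finset.mem_filter]
      exact ⟨(hrangeA _).mpr hx1, hnotused p.val (le_of_lt hPr) x hx2, hbp ▸ hx3⟩
    have := Finset.le_max' _ x hxS
    rw [← heq] at this
    exact this
  · -- IsLeast part
    intro p hp
    have hne := Stmt13Aux.T_nonempty a ha p.isLt (le_of_eq (hgood p.val (le_of_lt p.isLt)).1)
    have heq : Stmt13Aux.astarF hs a b p.val = _ :=
      Stmt13Aux.ch_eq_min' hs a b (by omega : ¬ p.val < s) hne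
    have hmem := Finset.min'_mem _ hne
    rw [← heq, Finset.mem_sdiff] at hmem
    refine ⟨⟨(hrangeA _).mp hmem.1, fun q hq => key p.val p.isLt q hq⟩, ?_⟩
    intro x hx
    obtain ⟨hx1, hx2⟩ := hx
    have hxS : x ∈ Stmt13Aux.AF a \ Stmt13Aux.usedF hs a b p.val :=
      Finset.mem_sdiff.mpr ⟨(hrangeA _).mpr hx1, hnotused p.val (le_of_lt p.isLt) x hx2⟩
    have := Finset.min'_le _ x hxS
    rw [← heq] at this
    exact this
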